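/- Let G be a finite abelian group and let D ⊆ G with |D| = |G| - c ≥ c. Let b ∈ G and 0 ≤ k ≤ |D|. Then |N(D,k,b) - (1/|G|)·C(|G|-c, k)| ≤ C(c + (|G|-2c)·δ(e(G)) + k - 1, k), where e(G) is the exponent of G. -/

import Mathlib

open Finset

/-- `N(D, k, b)`: the number of `k`-element subsets `S ⊆ D` with `∑_{x ∈ S} x = b`. -/
def subsetSumCount {G : Type*} [AddCommGroup G] [DecidableEq G]
    (D : Finset G) (k : ℕ) (b : G) : ℕ :=
  ((D.powersetCard k).filter (fun S => ∑ x ∈ S, x = b)).card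

/-- The real "binomial coefficient" `C(x, k) = x(x-1)⋯(x-k+1)/k!`. -/
noncomputable def realChoose (x : ℝ) (k : ℕ) : ℝ :=
  (∏ j ∈ Finset.range k, (x - j)) / (Nat.factorial k)

/-- `δ(n) = ∑_{i ∣ n, μ(i) = -1} 1/i`. -/
noncomputable def deltaMoebius (n : ℕ) : ℝ :=
  ∑ i ∈ n.divisors.filter (fun i => ArithmeticFunction.moebius i = -1), (1 : ℝ) / i

set_option linter.unusedSectionVars false
set_option linter.unusedVariables false

namespace SubsetSumAux




/-- rising-factorial choose: `rr x k = x(x+1)⋯(x+k-1)/k!`. -/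
noncomputable def rr (x : ℝ) (k : ℕ) : ℝ :=
  (∏ j ∈ Finset.range k, (x + j)) / (Nat.factorial k)

lemma realChoose_eq_rr (x : ℝ) (k : ℕ) : realChoose (x + k - 1) k = rr x k := by
  unfold realChoose rr
  congr 1
  rw [← Finset.prod_range_reflect (fun j => x + j) k]
  refine Finset.prod_congr rfl fun j hj => ?_
  rw [Finset.mem_range] at hj
  have h1 : 1 ≤ k := Nat.one_le_of_lt (Nat.lt_of_le_of_lt (Nat.zero_le j) hj)
  have h2 : j ≤ k - 1 := Nat.le_sub_one_of_lt hj
  have : ((k - 1 - j : ℕ) : ℝ) = (k : ℝ) - 1 - j := by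
    push_cast [Nat.cast_sub h2, Nat.cast_sub h1]
    ring
  rw [this]; ring

lemma rr_zero (x : ℝ) : rr x 0 = 1 := by simp [rr]

lemma rr_succ (x : ℝ) (k : ℕ) : rr x (k + 1) = (x + k) / (k + 1) * rr x k := by
  unfold rr
  rw [Finset.prod_range_succ, Nat.factorial_succ]
  push_cast
  have hk : (Nat.factorial k : ℝ) ≠ 0 := Nat.cast_ne_zero.2 (Nat.factorial_ne_zero k)
  have hk1 : ((k : ℝ) + 1) ≠ 0 := by positivity
  field_simp

lemma rr_nonneg {x : ℝ} (hx : 0 ≤ x) (k : ℕ) : 0 ≤ rr x k := by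
  unfold rr
  apply div_nonneg _ (by positivity)
  exact Finset.prod_nonneg fun j _ => by positivity

lemma rr_mono_k {x : ℝ} (hx : 1 ≤ x) : Monotone (rr x) := by
  apply monotone_nat_of_le_succ
  intro k
  rw [rr_succ]
  have h0 : 0 ≤ rr x k := rr_nonneg (by linarith) k
  have h1 : (1 : ℝ) ≤ (x + k) / (k + 1) := by
    rw [le_div_iff₀ (by positivity)]
    linarith
  nlinarith

lemma rr_mono_x {x y : ℝ} (hx : 0 ≤ x) (hxy : x ≤ y) (k : ℕ) : rr x k ≤ rr y k := by
  unfold rr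
  apply div_le_div_of_nonneg_right ?_ (by positivity) |>.trans_eq rfl
  case _ =>
    exact Finset.prod_le_prod (fun j _ => by positivity) (fun j _ => by linarith)

lemma rr_sum {x : ℝ} (k : ℕ) : x * ∑ j ∈ Finset.range k, rr x j = k * rr x k := by
  induction k with
  | zero => simp
  | succ k ih =>
    rw [Finset.sum_range_succ, mul_add, ih, rr_succ]
    have hk1 : ((k : ℝ) + 1) ≠ 0 := by positivity
    field_simp
    push_cast
    ring


lemma blocks_aux (g : ℕ → ℝ) (hg0 : ∀ j, 0 ≤ g j)
    (hga : ∀ {i j : ℕ}, i ≤ j → g j ≤ g i) (d : ℕ) (hd : 1 ≤ d) :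
    ∀ m : ℕ, (d : ℝ) * ∑ i ∈ Finset.Ioc 0 m, g (d * i) ≤ ∑ j ∈ Finset.Ioc 0 (d * m), g j := by
  intro m
  induction m with
  | zero => simp
  | succ m ih =>
    have h1 : (0:ℕ) ≤ d * m := Nat.zero_le _
    have h2 : d * m ≤ d * (m + 1) := Nat.mul_le_mul_left d (Nat.le_succ m)
    rw [← Finset.sum_Ioc_consecutive g h1 h2]
    rw [Finset.sum_Ioc_succ_top (Nat.zero_le m), mul_add]
    have hblock : (d:ℝ) * g (d * (m+1)) ≤ ∑ j ∈ Finset.Ioc (d*m) (d*(m+1)), g j := by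
      have hcard : (Finset.Ioc (d*m) (d*(m+1))).card = d := by
        rw [Nat.card_Ioc, Nat.mul_succ]; omega
      have := Finset.card_nsmul_le_sum (Finset.Ioc (d*m) (d*(m+1))) g (g (d*(m+1)))
        (fun j hj => hga (Finset.mem_Ioc.1 hj).2)
      rw [hcard, nsmul_eq_mul] at this
      exact this
    linarith

lemma blocks (g : ℕ → ℝ) (hg0 : ∀ j, 0 ≤ g j)
    (hga : ∀ {i j : ℕ}, i ≤ j → g j ≤ g i) (d : ℕ) (hd : 1 ≤ d) (k : ℕ) :
    (d : ℝ) * ∑ j ∈ (Finset.Ioc 0 k).filter (fun j => d ∣ j), g j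
      ≤ ∑ j ∈ Finset.Ioc 0 k, g j := by
  have hd0 : 0 < d := hd
  have himg : (Finset.Ioc 0 k).filter (fun j => d ∣ j)
      = (Finset.Ioc 0 (k / d)).image (fun i => d * i) := by
    ext j
    simp only [Finset.mem_filter, Finset.mem_Ioc, Finset.mem_image]
    constructor
    · rintro ⟨⟨hj0, hjk⟩, i, rfl⟩
      have hi0 : 0 < i := by
        rcases Nat.eq_zero_or_pos i with rfl | h
        · simp at hj0
        · exact h
      exact ⟨i, ⟨hi0, (Nat.le_div_iff_mul_le hd0).2 (by rw [mul_comm]; exact hjk)⟩, rfl⟩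
    · rintro ⟨i, ⟨hi0, hik⟩, rfl⟩
      refine ⟨⟨Nat.mul_pos hd0 hi0, ?_⟩, ⟨i, rfl⟩⟩
      calc d * i ≤ d * (k / d) := Nat.mul_le_mul_left d hik
        _ ≤ k := Nat.mul_div_le k d
  rw [himg, Finset.sum_image (fun a _ b _ h => Nat.eq_of_mul_eq_mul_left hd0 h)]
  calc (d:ℝ) * ∑ i ∈ Finset.Ioc 0 (k / d), g (d * i)
      ≤ ∑ j ∈ Finset.Ioc 0 (d * (k / d)), g j := blocks_aux g hg0 hga d hd _
    _ ≤ ∑ j ∈ Finset.Ioc 0 k, g j := by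
        apply Finset.sum_le_sum_of_subset_of_nonneg
        · exact Finset.Ioc_subset_Ioc le_rfl (Nat.mul_div_le k d)
        · intro i _ _; exact hg0 i










/-- The core analytic estimate. -/
lemma core (E P : ℕ → ℂ) (cR nR δ x : ℝ) (d : ℕ) (hd : 2 ≤ d)
    (hcR : 0 ≤ cR) (hcn : cR ≤ nR)
    (hE0 : E 0 = 1)
    (hrec : ∀ k : ℕ, 0 < k → (k : ℝ) * ‖E k‖ ≤ ∑ j ∈ Finset.Ioc 0 k, ‖P j‖ * ‖E (k - j)‖)
    (hPd : ∀ j : ℕ, 0 < j → d ∣ j → ‖P j‖ ≤ nR)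
    (hPnd : ∀ j : ℕ, 0 < j → ¬ d ∣ j → ‖P j‖ ≤ cR)
    (hδ : 1 / (d : ℝ) ≤ δ)
    (hx : x = cR + (nR - cR) * δ) (hx1 : 1 ≤ x) :
    ∀ k, ‖E k‖ ≤ rr x k := by
  have hx0 : 0 ≤ x := by linarith
  intro k
  induction k using Nat.strong_induction_on with
  | _ k IH =>
    rcases Nat.eq_zero_or_pos k with rfl | hk
    · rw [hE0, rr_zero]; simp
    -- the antitone weight function
    set g : ℕ → ℝ := fun j => rr x (k - j) with hg
    have hg0 : ∀ j, 0 ≤ g j := fun j => rr_nonneg hx0 _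
    have hga : ∀ {i j : ℕ}, i ≤ j → g j ≤ g i := by
      intro i j hij
      exact rr_mono_k hx1 (Nat.sub_le_sub_left hij k)
    -- step 1 : termwise bound
    have step1 : (k : ℝ) * ‖E k‖
        ≤ ∑ j ∈ Finset.Ioc 0 k, (if d ∣ j then nR else cR) * g j := by
      refine (hrec k hk).trans (Finset.sum_le_sum fun j hj => ?_)
      rw [Finset.mem_Ioc] at hj
      have hlt : k - j < k := Nat.sub_lt hk hj.1
      have hE : ‖E (k - j)‖ ≤ g j := IH _ hlt
      have hP : ‖P j‖ ≤ (if d ∣ j then nR else cR) := by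
        split_ifs with h
        · exact hPd j hj.1 h
        · exact hPnd j hj.1 h
      exact mul_le_mul hP hE (norm_nonneg _) (by split_ifs <;> linarith)
    -- step 2 : split the weight
    have step2 : ∑ j ∈ Finset.Ioc 0 k, (if d ∣ j then nR else cR) * g j
        = cR * (∑ j ∈ Finset.Ioc 0 k, g j)
          + (nR - cR) * ∑ j ∈ (Finset.Ioc 0 k).filter (fun j => d ∣ j), g j := by
      rw [Finset.mul_sum, Finset.mul_sum, Finset.sum_filter, ← Finset.sum_add_distrib]
      refine Finset.sum_congr rfl fun j _ => ?_
      split_ifs <;> ring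
    -- step 3 : the filtered sum is at most δ * total
    have step3 : ∑ j ∈ (Finset.Ioc 0 k).filter (fun j => d ∣ j), g j
        ≤ δ * ∑ j ∈ Finset.Ioc 0 k, g j := by
      have hT0 : 0 ≤ ∑ j ∈ Finset.Ioc 0 k, g j :=
        Finset.sum_nonneg fun j _ => hg0 j
      have hb := blocks g hg0 hga d (by omega) k
      have hd0 : (0:ℝ) < d := by positivity
      calc ∑ j ∈ (Finset.Ioc 0 k).filter (fun j => d ∣ j), g j
          ≤ (1 / d) * ∑ j ∈ Finset.Ioc 0 k, g j := by
            rw [div_mul_eq_mul_div, le_div_iff₀ hd0]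
            linarith
        _ ≤ δ * ∑ j ∈ Finset.Ioc 0 k, g j :=
            mul_le_mul_of_nonneg_right hδ hT0
    -- step 4 : reindex the total sum
    have step4 : ∑ j ∈ Finset.Ioc 0 k, g j = ∑ j ∈ Finset.range k, rr x j := by
      have h1 : Finset.Ioc 0 k = Finset.Ico 1 (k + 1) := by
        ext j; simp [Finset.mem_Ioc, Finset.mem_Ico]; omega
      rw [h1, Finset.sum_Ico_eq_sum_range]
      simp only [Nat.add_sub_cancel]
      rw [← Finset.sum_range_reflect (fun j => rr x j) k]
      exact Finset.sum_congr rfl fun j hj => congrArg (rr x) (by omega)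
    have hT0 : 0 ≤ ∑ j ∈ Finset.range k, rr x j :=
      Finset.sum_nonneg fun j _ => rr_nonneg hx0 j
    have final : (k : ℝ) * ‖E k‖ ≤ (k : ℝ) * rr x k := by
      have hnc : 0 ≤ nR - cR := by linarith
      calc (k : ℝ) * ‖E k‖
          ≤ cR * (∑ j ∈ Finset.Ioc 0 k, g j)
            + (nR - cR) * ∑ j ∈ (Finset.Ioc 0 k).filter (fun j => d ∣ j), g j := by
            rw [← step2]; exact step1
        _ ≤ cR * (∑ j ∈ Finset.Ioc 0 k, g j)
            + (nR - cR) * (δ * ∑ j ∈ Finset.Ioc 0 k, g j) := by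
            have := mul_le_mul_of_nonneg_left step3 hnc
            linarith
        _ = x * ∑ j ∈ Finset.range k, rr x j := by rw [step4, hx]; ring
        _ = (k : ℝ) * rr x k := rr_sum k
    have hk0 : (0:ℝ) < k := by exact_mod_cast hk
    exact le_of_mul_le_mul_left final hk0




lemma delta_nonneg (n : ℕ) : 0 ≤ deltaMoebius n :=
  Finset.sum_nonneg fun i _ => by positivity

lemma delta_mono {d e : ℕ} (h : d ∣ e) (he : e ≠ 0) : deltaMoebius d ≤ deltaMoebius e := by
  apply Finset.sum_le_sum_of_subset_of_nonneg
  · exact Finset.filter_subset_filter _ (Nat.divisors_subset_of_dvd he h)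
  · intro i _ _; positivity

lemma one_div_le_delta {d : ℕ} (hd : 2 ≤ d) : 1 / (d : ℝ) ≤ deltaMoebius d := by
  have hd0 : d ≠ 0 := by omega
  have hp : d.minFac.Prime := Nat.minFac_prime (by omega)
  have hmem : d.minFac ∈ d.divisors.filter (fun i => ArithmeticFunction.moebius i = -1) := by
    rw [Finset.mem_filter, Nat.mem_divisors]
    exact ⟨⟨Nat.minFac_dvd d, hd0⟩, by rw [ArithmeticFunction.moebius_apply_prime hp]⟩
  have h1 : 1 / (d : ℝ) ≤ 1 / (d.minFac : ℝ) := by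
    apply one_div_le_one_div_of_le
    · exact_mod_cast hp.pos
    · exact_mod_cast Nat.minFac_le (by omega)
  refine h1.trans ?_
  exact Finset.single_le_sum (f := fun i : ℕ => 1 / (i : ℝ)) (fun i _ => by positivity) hmem

lemma realChoose_natCast {n k : ℕ} (hkn : k ≤ n) :
    realChoose (n : ℝ) k = (n.choose k : ℝ) := by
  unfold realChoose
  have h1 : ∏ j ∈ Finset.range k, ((n : ℝ) - j) = (n.descFactorial k : ℝ) := by
    rw [Nat.descFactorial_eq_prod_range, Nat.cast_prod]
    refine Finset.prod_congr rfl fun j hj => ?_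
    rw [Finset.mem_range] at hj
    rw [Nat.cast_sub (le_trans (le_of_lt hj) hkn)]
  rw [h1, Nat.descFactorial_eq_factorial_mul_choose]
  push_cast
  rw [mul_comm, mul_div_assoc, div_self (by exact_mod_cast (Nat.factorial_ne_zero k)), mul_one]

section Group

variable {G : Type*} [AddCommGroup G] [DecidableEq G]

lemma map_finsetSum (ψ : AddChar G ℂ) (S : Finset G) :
    ψ (∑ x ∈ S, x) = ∏ x ∈ S, ψ x := by
  classical
  induction S using Finset.cons_induction with
  | empty => simp
  | cons a s ha ih => rw [Finset.sum_cons, Finset.prod_cons, AddChar.map_add_eq_mul, ih]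

/-- elementary symmetric sums of character values over `D`. -/
noncomputable def Ef (D : Finset G) (ψ : AddChar G ℂ) (j : ℕ) : ℂ :=
  ∑ S ∈ D.powersetCard j, ∏ x ∈ S, ψ x

/-- power sums of character values over `D`. -/
noncomputable def Pf (D : Finset G) (ψ : AddChar G ℂ) (j : ℕ) : ℂ :=
  ∑ x ∈ D, ψ x ^ j

lemma aeval_esymm (D : Finset G) (ψ : AddChar G ℂ) (j : ℕ) :
    (MvPolynomial.aeval (fun i : ↥D => ψ i.1)) (MvPolynomial.esymm ↥D ℂ j) = Ef D ψ j := by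
  rw [MvPolynomial.aeval_esymm_eq_multiset_esymm]
  have h : (Finset.univ.val.map fun i : ↥D => ψ i.1) = D.val.map ψ := by
    rw [Finset.univ_eq_attach]
    exact Multiset.attach_map_val' D.val ψ
  rw [h, Finset.esymm_map_val]
  rfl

lemma aeval_psum (D : Finset G) (ψ : AddChar G ℂ) (j : ℕ) :
    (MvPolynomial.aeval (fun i : ↥D => ψ i.1)) (MvPolynomial.psum ↥D ℂ j) = Pf D ψ j := by
  rw [MvPolynomial.psum, map_sum]
  simp only [map_pow, MvPolynomial.aeval_X]
  rw [Finset.univ_eq_attach, Finset.sum_attach D (fun x => ψ x ^ j)]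
  rfl

lemma Ef_zero (D : Finset G) (ψ : AddChar G ℂ) : Ef D ψ 0 = 1 := by
  simp [Ef]

lemma newton_norm_bound (D : Finset G) (ψ : AddChar G ℂ) :
    ∀ k : ℕ, 0 < k → (k : ℝ) * ‖Ef D ψ k‖
      ≤ ∑ j ∈ Finset.Ioc 0 k, ‖Pf D ψ j‖ * ‖Ef D ψ (k - j)‖ := by
  intro k hk
  have hnewton := congrArg (MvPolynomial.aeval (fun i : ↥D => ψ i.1))
    (MvPolynomial.mul_esymm_eq_sum ↥D ℂ k)
  rw [map_mul, map_mul, map_natCast, map_pow, map_sum, aeval_esymm] at hnewton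
  simp only [map_mul, map_pow, aeval_esymm, aeval_psum, map_neg, map_one] at hnewton
  have hnorm : (k : ℝ) * ‖Ef D ψ k‖
      ≤ ∑ a ∈ (Finset.HasAntidiagonal.antidiagonal k).filter (fun a => a.1 < k),
          ‖Ef D ψ a.1‖ * ‖Pf D ψ a.2‖ := by
    calc (k : ℝ) * ‖Ef D ψ k‖ = ‖(k : ℂ) * Ef D ψ k‖ := by
          rw [norm_mul, Complex.norm_natCast]
      _ = ‖(-1 : ℂ) ^ (k+1) * ∑ a ∈ (Finset.HasAntidiagonal.antidiagonal k).filter (fun a => a.1 < k),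
            (-1 : ℂ) ^ a.1 * Ef D ψ a.1 * Pf D ψ a.2‖ := by rw [hnewton]
      _ = ‖∑ a ∈ (Finset.HasAntidiagonal.antidiagonal k).filter (fun a => a.1 < k),
            (-1 : ℂ) ^ a.1 * Ef D ψ a.1 * Pf D ψ a.2‖ := by
          rw [norm_mul, norm_pow, norm_neg, norm_one, one_pow, one_mul]
      _ ≤ ∑ a ∈ (Finset.HasAntidiagonal.antidiagonal k).filter (fun a => a.1 < k),
            ‖(-1 : ℂ) ^ a.1 * Ef D ψ a.1 * Pf D ψ a.2‖ := norm_sum_le _ _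
      _ = ∑ a ∈ (Finset.HasAntidiagonal.antidiagonal k).filter (fun a => a.1 < k),
            ‖Ef D ψ a.1‖ * ‖Pf D ψ a.2‖ := by
          refine Finset.sum_congr rfl fun a _ => ?_
          rw [norm_mul, norm_mul, norm_pow, norm_neg, norm_one, one_pow, one_mul]
  refine hnorm.trans_eq ?_
  refine Finset.sum_nbij' (fun a => a.2) (fun j => (k - j, j)) ?_ ?_ ?_ ?_ ?_
  · intro a ha
    simp only [Finset.mem_filter, Finset.HasAntidiagonal.mem_antidiagonal] at ha
    simp only [Finset.mem_Ioc]
    omega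
  · intro j hj
    simp only [Finset.mem_Ioc] at hj
    simp only [Finset.mem_filter, Finset.HasAntidiagonal.mem_antidiagonal]
    omega
  · intro a ha
    simp only [Finset.mem_filter, Finset.HasAntidiagonal.mem_antidiagonal] at ha
    have : k - a.2 = a.1 := by omega
    simp [this]
  · intro j hj; rfl
  · intro a ha
    simp only [Finset.mem_filter, Finset.HasAntidiagonal.mem_antidiagonal] at ha
    have : k - a.2 = a.1 := by omega
    rw [this, mul_comm]

end Group

end SubsetSumAux

open SubsetSumAux

/-- **Theorem (subset sums over a finite abelian group).**
If `D ⊆ G` with `|D| = |G| - c ≥ c` and `0 ≤ k ≤ |D|`, then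
`|N(D,k,b) - (1/|G|)·C(|G|-c, k)| ≤ C(c + (|G|-2c)·δ(e(G)) + k - 1, k)`. -/
theorem subsetSum_asymptotic_abelian
    (G : Type*) [AddCommGroup G] [Fintype G] [DecidableEq G]
    (D : Finset G) (c k : ℕ) (b : G)
    (hD : D.card + c = Fintype.card G) (hc : c ≤ D.card) (hk : k ≤ D.card) :
    |(subsetSumCount D k b : ℝ)
        - (1 / (Fintype.card G : ℝ)) * realChoose ((Fintype.card G : ℝ) - c) k|
      ≤ realChoose ((c : ℝ) + ((Fintype.card G : ℝ) - 2 * c) *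
          deltaMoebius (AddMonoid.exponent G) + k - 1) k := by
    classical
  set N := Fintype.card G with hNdef
  set n := D.card with hndef
  set e := AddMonoid.exponent G with hedef
  have hN0 : 0 < N := Fintype.card_pos
  have hNn : (n : ℝ) + c = N := by exact_mod_cast hD
  have he0 : e ≠ 0 := AddMonoid.exponent_ne_zero_of_finite
  have heN : e ∣ N := AddGroup.exponent_dvd_card
  set X : ℝ := (c : ℝ) + ((N : ℝ) - 2 * c) * deltaMoebius e with hXdef
  have hXn : (N : ℝ) - 2 * c = (n : ℝ) - c := by linarith
  -- Fourier identity
  have hFourier : ∑ ψ : AddChar G ℂ, ψ (-b) * Ef D ψ k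
      = (subsetSumCount D k b : ℂ) * N := by
    have h1 : ∀ ψ : AddChar G ℂ, ψ (-b) * Ef D ψ k
        = ∑ S ∈ D.powersetCard k, ψ (-b + ∑ x ∈ S, x) := by
      intro ψ
      rw [Ef, Finset.mul_sum]
      exact Finset.sum_congr rfl fun S _ => by
        rw [AddChar.map_add_eq_mul, SubsetSumAux.map_finsetSum]
    simp_rw [h1]
    rw [Finset.sum_comm]
    have h2 : ∀ S : Finset G, ∑ ψ : AddChar G ℂ, ψ (-b + ∑ x ∈ S, x)
        = if ∑ x ∈ S, x = b then (N : ℂ) else 0 := by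
      intro S
      rw [AddChar.sum_apply_eq_ite]
      have hiff : (-b + ∑ x ∈ S, x = 0) = (∑ x ∈ S, x = b) := by
        rw [neg_add_eq_zero]
        exact propext eq_comm
      simp only [hiff, hNdef]
    simp_rw [h2]
    rw [← Finset.sum_filter, Finset.sum_const, nsmul_eq_mul, subsetSumCount]
  -- trivial character value
  have hEf0 : Ef D (0 : AddChar G ℂ) k = (n.choose k : ℂ) := by
    rw [Ef]
    simp only [AddChar.zero_apply, Finset.prod_const_one, Finset.sum_const, nsmul_eq_mul, mul_one]
    rw [Finset.card_powersetCard]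
  -- split off the trivial character
  set T : ℂ := ∑ ψ ∈ (Finset.univ : Finset (AddChar G ℂ)).erase 0, ψ (-b) * Ef D ψ k with hT
  have hsplit : (subsetSumCount D k b : ℂ) * N - (n.choose k : ℂ) = T := by
    have h := Finset.add_sum_erase (Finset.univ : Finset (AddChar G ℂ))
      (fun ψ => ψ (-b) * Ef D ψ k) (Finset.mem_univ 0)
    rw [← hFourier, ← h, hEf0, AddChar.zero_apply, one_mul]
    ring
  -- bound each nontrivial character term
  have hbound : ∀ ψ ∈ (Finset.univ : Finset (AddChar G ℂ)).erase 0,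
      ‖Ef D ψ k‖ ≤ rr X k := by
    intro ψ hψmem
    have hψ : ψ ≠ 0 := (Finset.mem_erase.1 hψmem).1
    set d := addOrderOf ψ with hddef
    have hψe : e • ψ = 0 := by
      ext a
      rw [AddChar.nsmul_apply, AddChar.zero_apply, ← AddChar.map_nsmul_eq_pow,
        AddMonoid.exponent_nsmul_eq_zero, AddChar.map_zero_eq_one]
    have hde : d ∣ e := addOrderOf_dvd_of_nsmul_eq_zero hψe
    have hd2 : 2 ≤ d := by
      have h1 : d ≠ 1 := fun h => hψ (AddMonoid.addOrderOf_eq_one_iff.1 h)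
      have h0 : d ≠ 0 := fun h => he0 (by rw [h] at hde; exact zero_dvd_iff.1 hde)
      omega
    have hdN : d ≤ N := Nat.le_of_dvd hN0 (hde.trans heN)
    set δd : ℝ := deltaMoebius d with hδd
    set x : ℝ := (c : ℝ) + ((n : ℝ) - c) * δd with hxdef
    have hδdd : 1 / (d : ℝ) ≤ δd := one_div_le_delta hd2
    have hcn : (c : ℝ) ≤ (n : ℝ) := by exact_mod_cast hc
    have hx1 : 1 ≤ x := by
      rcases Nat.eq_zero_or_pos c with hc0 | hc1
      · have hnN : (n : ℝ) = N := by rw [hc0] at hNn; simpa using hNn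
        have hd0 : (0 : ℝ) < d := by positivity
        have h1 : (1 : ℝ) ≤ (N : ℝ) * (1 / d) := by
          rw [mul_one_div, le_div_iff₀ hd0]
          exact_mod_cast by simpa using hdN
        have h2 : (N : ℝ) * (1 / d) ≤ (N : ℝ) * δd :=
          mul_le_mul_of_nonneg_left hδdd (by positivity)
        rw [hxdef, hc0, hnN]
        push_cast
        linarith
      · have h1 : (1 : ℝ) ≤ c := by exact_mod_cast hc1
        have h2 : 0 ≤ ((n : ℝ) - c) * δd :=
          mul_nonneg (by linarith) (delta_nonneg d)
        rw [hxdef]; linarith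
    -- power sum estimates
    have hPd : ∀ j : ℕ, 0 < j → d ∣ j → ‖Pf D ψ j‖ ≤ (n : ℝ) := by
      intro j hj hdj
      have hjψ : j • ψ = 0 := addOrderOf_dvd_iff_nsmul_eq_zero.1 hdj
      have : Pf D ψ j = (n : ℂ) := by
        rw [Pf]
        have : ∀ x ∈ D, ψ x ^ j = 1 := by
          intro x hx
          have := congrArg (fun φ : AddChar G ℂ => φ x) hjψ
          simpa [AddChar.nsmul_apply] using this
        rw [Finset.sum_congr rfl this, Finset.sum_const, nsmul_eq_mul, mul_one]
      rw [this]
      simp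
    have hPnd : ∀ j : ℕ, 0 < j → ¬ d ∣ j → ‖Pf D ψ j‖ ≤ (c : ℝ) := by
      intro j hj hdj
      have hjψ : j • ψ ≠ 0 := fun h => hdj (addOrderOf_dvd_iff_nsmul_eq_zero.2 h)
      have hsum : ∑ x : G, ψ x ^ j = 0 := by
        have : ∑ x : G, (j • ψ) x = 0 := AddChar.sum_eq_zero_iff_ne_zero.2 hjψ
        simpa [AddChar.nsmul_apply] using this
      have hPf : Pf D ψ j = -∑ x ∈ Finset.univ \ D, ψ x ^ j := by
        have := Finset.sum_sdiff (Finset.subset_univ D)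
          (f := fun x : G => ψ x ^ j)
        rw [Pf]
        rw [hsum] at this
        linear_combination this
      rw [hPf, norm_neg]
      calc ‖∑ x ∈ Finset.univ \ D, ψ x ^ j‖
          ≤ ∑ x ∈ Finset.univ \ D, ‖ψ x ^ j‖ := norm_sum_le _ _
        _ = ∑ x ∈ Finset.univ \ D, (1 : ℝ) := by
            refine Finset.sum_congr rfl fun x _ => ?_
            rw [norm_pow, AddChar.norm_apply, one_pow]
        _ = ((Finset.univ \ D).card : ℝ) := by rw [Finset.sum_const, nsmul_eq_mul, mul_one]
        _ = (c : ℝ) := by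
            rw [Finset.card_sdiff_of_subset (Finset.subset_univ D), Finset.card_univ]
            have : N - n = c := by omega
            rw [← hNdef, ← hndef, this]
    -- apply the core estimate
    have hcore := core (Ef D ψ) (Pf D ψ) (c : ℝ) (n : ℝ) δd x d hd2
      (by positivity) hcn (Ef_zero D ψ) (newton_norm_bound D ψ) hPd hPnd hδdd rfl hx1 k
    refine hcore.trans ?_
    refine rr_mono_x (by linarith) ?_ k
    rw [hxdef, hXdef, hXn]
    have h1 : δd ≤ deltaMoebius e := delta_mono hde he0
    have h2 : (0 : ℝ) ≤ (n : ℝ) - c := by linarith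
    nlinarith
  -- sum up
  have hrrX0 : 0 ≤ rr X k := by
    apply rr_nonneg
    rw [hXdef, hXn]
    have h2 : (0 : ℝ) ≤ (n : ℝ) - c := by
      have : (c : ℝ) ≤ (n : ℝ) := by exact_mod_cast hc
      linarith
    nlinarith [mul_nonneg h2 (delta_nonneg e), (Nat.cast_nonneg c : (0:ℝ) ≤ (c:ℝ))]
  have hTle : ‖T‖ ≤ ((N : ℝ) - 1) * rr X k := by
    calc ‖T‖ ≤ ∑ ψ ∈ (Finset.univ : Finset (AddChar G ℂ)).erase 0,
          ‖ψ (-b) * Ef D ψ k‖ := norm_sum_le _ _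
      _ = ∑ ψ ∈ (Finset.univ : Finset (AddChar G ℂ)).erase 0, ‖Ef D ψ k‖ := by
          refine Finset.sum_congr rfl fun ψ _ => ?_
          rw [norm_mul, AddChar.norm_apply, one_mul]
      _ ≤ ∑ ψ ∈ (Finset.univ : Finset (AddChar G ℂ)).erase 0, rr X k :=
          Finset.sum_le_sum hbound
      _ = ((N : ℝ) - 1) * rr X k := by
          rw [Finset.sum_const, nsmul_eq_mul,
            Finset.card_erase_of_mem (Finset.mem_univ 0), Finset.card_univ, AddChar.card_eq, ← hNdef]
          have h1 : (1 : ℕ) ≤ N := hN0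
          push_cast [Nat.cast_sub h1]
          ring
  -- conclude
  have hRC : realChoose ((N : ℝ) - c) k = (n.choose k : ℝ) := by
    have : (N : ℝ) - c = (n : ℝ) := by linarith
    rw [this, realChoose_natCast hk]
  have hreal : |(subsetSumCount D k b : ℝ) - (1 / (N : ℝ)) * (n.choose k : ℝ)|
      ≤ rr X k := by
    have hNC : (N : ℂ) ≠ 0 := Nat.cast_ne_zero.2 (by omega)
    have hTc : (((subsetSumCount D k b : ℝ) - (1 / (N : ℝ)) * (n.choose k : ℝ) : ℝ) : ℂ)
        = T / N := by
      push_cast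
      rw [eq_div_iff hNC]
      have := hsplit
      field_simp
      linear_combination this
    have : |(subsetSumCount D k b : ℝ) - (1 / (N : ℝ)) * (n.choose k : ℝ)| = ‖T / (N : ℂ)‖ := by
      rw [← hTc, Complex.norm_real, Real.norm_eq_abs]
    rw [this, norm_div]
    have hNnorm : ‖(N : ℂ)‖ = (N : ℝ) := by
      rw [Complex.norm_natCast]
    rw [hNnorm, div_le_iff₀ (by exact_mod_cast hN0)]
    nlinarith
  rw [realChoose_eq_rr X k, hRC]
  exact hreal
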